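/- Let G be a po-group (written multiplicatively) with positive cone G⁺ and negative cone G⁻, let I be a set and λ, ρ : I → I bijections. Then the structure K with universe the disjoint union (G⁺)^I ⊎ (G⁻)^I, with 0 the constant sequence e in (G⁺)^I, 1 the constant sequence e⁻¹ in (G⁻)^I, and partial operation + defined by: (I) ⟨aᵢ⁻¹⟩ + ⟨bᵢ⁻¹⟩ undefined; (II) ⟨aᵢ⁻¹⟩ + ⟨fⱼ⟩ := ⟨aᵢ⁻¹ f_{ρ⁻¹(i)}⟩ whenever f_{ρ⁻¹(i)} ≤ aᵢ for all i; (III) ⟨fⱼ⟩ + ⟨aᵢ⁻¹⟩ := ⟨f_{λ⁻¹(i)} aᵢ⁻¹⟩ whenever f_{λ⁻¹(i)} ≤ aᵢ for all i; (IV) ⟨fⱼ⟩ + ⟨gⱼ⟩ := ⟨fⱼ gⱼ⟩ always; is a pseudo effect algebra. -/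

import Mathlib

/-- A pseudo effect algebra: a partial algebra `(E; +, 0, 1)` where the partial
operation is modeled as `add : E → E → Option E` (`none` = undefined). -/
structure PseudoEffectAlgebra (E : Type*) where
  add : E → E → Option E
  zero : E
  one : E
  /-- (i): `a+b` and `(a+b)+c` exist iff `b+c` and `a+(b+c)` exist, and then they are equal. -/
  assoc : ∀ a b c : E, (add a b).bind (fun x => add x c) = (add b c).bind (fun x => add a x)
  /-- (ii): there is exactly one `d` with `a + d = 1`. -/
  rcompl : ∀ a : E, ∃! d, add a d = some one
  /-- (ii): there is exactly one `e` with `e + a = 1`. -/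
  lcompl : ∀ a : E, ∃! e', add e' a = some one
  /-- (iii): if `a+b` exists, then `a+b = d+a = b+e` for some `d, e`. -/
  exch : ∀ a b s : E, add a b = some s → (∃ d, add d a = some s) ∧ (∃ e', add b e' = some s)
  /-- (iv): if `1+a` exists then `a = 0`. -/
  one_add : ∀ a : E, (add one a).isSome → a = zero
  /-- (iv): if `a+1` exists then `a = 0`. -/
  add_one : ∀ a : E, (add a one).isSome → a = zero

open Classical in
/-- The universe of the kite: the disjoint union `(G⁺)^I ⊎ (G⁻)^I`. -/
def Kite (G : Type*) [Group G] [PartialOrder G] (I : Type*) : Type _ :=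
  (I → {g : G // 1 ≤ g}) ⊕ (I → {g : G // g ≤ 1})

open Classical in
/-- The kite partial addition (rules (I)–(IV)); elements of the upper part `(G⁻)^I`
are the tuples `⟨aᵢ⁻¹ : i ∈ I⟩`, stored via their values `aᵢ⁻¹ ∈ G⁻`. -/
noncomputable def kiteAdd {G : Type*} [Group G] [PartialOrder G]
    [CovariantClass G G (· * ·) (· ≤ ·)]
    [CovariantClass G G (Function.swap (· * ·)) (· ≤ ·)]
    {I : Type*} (l r : Equiv.Perm I) :
    Kite G I → Kite G I → Option (Kite G I)
  | Sum.inr _, Sum.inr _ => none                                      -- rule (I)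
  | Sum.inr a, Sum.inl f =>                                           -- rule (II)
      if h : ∀ i, (f (r.symm i) : G) ≤ ((a i : G))⁻¹ then
        some (Sum.inr (fun i => ⟨(a i : G) * (f (r.symm i) : G), by
          have := CovariantClass.elim (μ := fun x y : G => x * y) (r := fun x y : G => x ≤ y) (a i : G) (h i)
          simpa using this⟩))
      else none
  | Sum.inl f, Sum.inr a =>                                           -- rule (III)
      if h : ∀ i, (f (l.symm i) : G) ≤ ((a i : G))⁻¹ then
        some (Sum.inr (fun i => ⟨(f (l.symm i) : G) * (a i : G), by
          have := CovariantClass.elim (μ := Function.swap fun x y : G => x * y) (r := fun x y : G => x ≤ y) (a i : G) (h i)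
          simpa [Function.swap] using this⟩))
      else none
  | Sum.inl f, Sum.inl g =>                                           -- rule (IV)
      some (Sum.inl (fun j => ⟨(f j : G) * (g j : G), one_le_mul (f j).2 (g j).2⟩))

set_option linter.unusedSectionVars false

section KiteHelpers

variable {G : Type*} [Group G] [PartialOrder G]
    [CovariantClass G G (· * ·) (· ≤ ·)]
    [CovariantClass G G (Function.swap (· * ·)) (· ≤ ·)]
    {I : Type*}

/-- `x ≤ u⁻¹ ↔ x * u ≤ 1` in a po-group. -/
private lemma kite_le_inv_iff (x u : G) : x ≤ u⁻¹ ↔ x * u ≤ 1 := by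
  constructor
  · intro h; have := mul_le_mul_left h u; simpa using this
  · intro h; have := mul_le_mul_left h u⁻¹; simpa using this

/-- `x ≤ u⁻¹ ↔ u * x ≤ 1` in a po-group. -/
private lemma kite_le_inv_iff' (x u : G) : x ≤ u⁻¹ ↔ u * x ≤ 1 := by
  constructor
  · intro h; have := mul_le_mul_right h u; simpa using this
  · intro h; have := mul_le_mul_right h u⁻¹; simpa using this

private lemma kite_inr_eq {x y : I → {g : G // g ≤ 1}} (h : ∀ i, (x i : G) = y i) :
    (some (Sum.inr x) : Option (Kite G I)) = some (Sum.inr y) := by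
  have : x = y := funext fun i => Subtype.ext (h i)
  rw [this]
  rfl

private lemma kite_inl_eq {x y : I → {g : G // 1 ≤ g}} (h : ∀ i, (x i : G) = y i) :
    (some (Sum.inl x) : Option (Kite G I)) = some (Sum.inl y) := by
  have : x = y := funext fun i => Subtype.ext (h i)
  rw [this]
  rfl

end KiteHelpers

section KiteProof

variable {G : Type*} [Group G] [PartialOrder G]
    [CovariantClass G G (· * ·) (· ≤ ·)]
    [CovariantClass G G (Function.swap (· * ·)) (· ≤ ·)]
    {I : Type*}

private lemma kite_assoc (l r : Equiv.Perm I) (a b c : Kite G I) :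
    (kiteAdd l r a b).bind (fun x => kiteAdd l r x c)
      = (kiteAdd l r b c).bind (fun x => kiteAdd l r a x) := by
  rcases a with f | a <;> rcases b with g | b <;> rcases c with k | c
  · -- inl f, inl g, inl k
    simp only [kiteAdd, Kite, Option.bind_some]
    exact kite_inl_eq fun j => mul_assoc _ _ _
  · -- inl f, inl g, inr c
    simp only [kiteAdd, Kite, Option.bind_some]
    by_cases h2 : ∀ i, (g (l.symm i) : G) ≤ ((c i : G))⁻¹
    · rw [dif_pos h2]; simp only [Kite, Option.bind_some]
      have key : (∀ i, ((f (l.symm i) : G)) * g (l.symm i) ≤ ((c i : G))⁻¹) ↔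
          (∀ i, (f (l.symm i) : G) ≤ ((g (l.symm i) : G) * c i)⁻¹) :=
        forall_congr' fun i => by rw [kite_le_inv_iff, kite_le_inv_iff, mul_assoc]
      by_cases h1 : ∀ i, (f (l.symm i) : G) ≤ ((g (l.symm i) : G) * c i)⁻¹
      · rw [dif_pos h1, dif_pos (key.mpr h1)]
        exact kite_inr_eq fun i => mul_assoc _ _ _
      · rw [dif_neg h1, dif_neg (fun hh => h1 (key.mp hh))]
    · rw [dif_neg h2, Option.bind_none]
      exact dif_neg fun h1 => h2 fun i =>
        le_trans (le_mul_of_one_le_left' (f (l.symm i)).2) (h1 i)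
  · -- inl f, inr b, inl k
    simp only [kiteAdd]
    by_cases h1 : ∀ i, (f (l.symm i) : G) ≤ ((b i : G))⁻¹
    · rw [dif_pos h1]; simp only [Kite, Option.bind_some]
      by_cases h2 : ∀ i, (k (r.symm i) : G) ≤ ((b i : G))⁻¹
      · rw [dif_pos h2]; simp only [Kite, Option.bind_some]
        have key : (∀ i, (k (r.symm i) : G) ≤ ((f (l.symm i) : G) * (b i : G))⁻¹) ↔
            (∀ i, (f (l.symm i) : G) ≤ ((b i : G) * (k (r.symm i) : G))⁻¹) :=
          forall_congr' fun i => by rw [kite_le_inv_iff', kite_le_inv_iff, mul_assoc]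
        by_cases h3 : ∀ i, (k (r.symm i) : G) ≤ ((f (l.symm i) : G) * (b i : G))⁻¹
        · rw [dif_pos h3, dif_pos (key.mp h3)]
          exact kite_inr_eq fun i => mul_assoc _ _ _
        · rw [dif_neg h3, dif_neg (fun hh => h3 (key.mpr hh))]
      · rw [dif_neg h2, Option.bind_none]
        refine dif_neg fun h3 => h2 fun i => ?_
        have hh := h3 i
        rw [kite_le_inv_iff'] at hh ⊢
        calc (b i : G) * k (r.symm i)
            ≤ (f (l.symm i) : G) * ((b i : G) * k (r.symm i)) :=
              le_mul_of_one_le_left' (f _).2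
          _ = ((f (l.symm i) : G) * (b i : G)) * k (r.symm i) := (mul_assoc _ _ _).symm
          _ ≤ 1 := hh
    · rw [dif_neg h1, Option.bind_none]
      by_cases h2 : ∀ i, (k (r.symm i) : G) ≤ ((b i : G))⁻¹
      · rw [dif_pos h2]; simp only [Kite, Option.bind_some]
        have hcon : ¬ ∀ i, (f (l.symm i) : G) ≤ ((b i : G) * (k (r.symm i) : G))⁻¹ := by
          refine fun h3 => h1 fun i => ?_
          have hh := h3 i
          rw [kite_le_inv_iff] at hh ⊢
          calc (f (l.symm i) : G) * b i
              ≤ ((f (l.symm i) : G) * b i) * k (r.symm i) :=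
                le_mul_of_one_le_right' (k _).2
            _ = (f (l.symm i) : G) * ((b i : G) * k (r.symm i)) := mul_assoc _ _ _
            _ ≤ 1 := hh
        rw [dif_neg hcon]
      · rw [dif_neg h2, Option.bind_none]
  · -- inl f, inr b, inr c
    by_cases h1 : ∀ i, (f (l.symm i) : G) ≤ ((b i : G))⁻¹ <;>
      simp [kiteAdd, h1, Kite]
  · -- inr a, inl g, inl k
    simp only [kiteAdd, Kite, Option.bind_some]
    by_cases h1 : ∀ i, (g (r.symm i) : G) ≤ ((a i : G))⁻¹
    · rw [dif_pos h1]; simp only [Kite, Option.bind_some]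
      have key : (∀ i, (k (r.symm i) : G) ≤ ((a i : G) * (g (r.symm i) : G))⁻¹) ↔
          (∀ i, (g (r.symm i) : G) * k (r.symm i) ≤ ((a i : G))⁻¹) :=
        forall_congr' fun i => by rw [kite_le_inv_iff', kite_le_inv_iff', mul_assoc]
      by_cases h3 : ∀ i, (k (r.symm i) : G) ≤ ((a i : G) * (g (r.symm i) : G))⁻¹
      · rw [dif_pos h3, dif_pos (key.mp h3)]
        exact kite_inr_eq fun i => mul_assoc _ _ _
      · rw [dif_neg h3, dif_neg (fun hh => h3 (key.mpr hh))]
    · rw [dif_neg h1, Option.bind_none]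
      have hcon : ¬ ∀ i, ((g (r.symm i) : G) * k (r.symm i)) ≤ ((a i : G))⁻¹ :=
        fun h2 => h1 fun i =>
          le_trans (le_mul_of_one_le_right' (k (r.symm i)).2) (h2 i)
      rw [dif_neg hcon]
  · -- inr a, inl g, inr c
    simp only [kiteAdd]
    split_ifs <;> simp [kiteAdd, Kite]
  · -- inr a, inr b, inl k
    by_cases h1 : ∀ i, (k (r.symm i) : G) ≤ ((b i : G))⁻¹ <;>
      simp [kiteAdd, h1, Kite]
  · -- inr a, inr b, inr c
    simp [kiteAdd]

end KiteProof

section KiteProof2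

variable {G : Type*} [Group G] [PartialOrder G]
    [CovariantClass G G (· * ·) (· ≤ ·)]
    [CovariantClass G G (Function.swap (· * ·)) (· ≤ ·)]
    {I : Type*}

private lemma kite_rcompl (l r : Equiv.Perm I) (a : Kite G I) :
    ∃! d, kiteAdd l r a d = some (Sum.inr fun _ => (⟨1, le_refl 1⟩ : {g : G // g ≤ 1})) := by
  rcases a with f | α
  · refine ⟨Sum.inr (fun i => ⟨((f (l.symm i) : G))⁻¹, inv_le_one'.mpr (f _).2⟩), ?_, ?_⟩
    · simp only [kiteAdd]
      rw [dif_pos]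
      · exact kite_inr_eq fun i => by simp
      · intro i; simp
    · rintro (g | β) hd
      · simp [kiteAdd, Kite] at hd
      · simp only [kiteAdd] at hd
        split_ifs at hd with hc
        · have h2 := Sum.inr.inj (Option.some.inj hd)
          refine congrArg Sum.inr (funext fun i => Subtype.ext ?_)
          have h3 := congrArg Subtype.val (congrFun h2 i)
          exact (inv_eq_of_mul_eq_one_right h3).symm
  · refine ⟨Sum.inl (fun j => ⟨((α (r j) : G))⁻¹, one_le_inv'.mpr (α _).2⟩), ?_, ?_⟩
    · simp only [kiteAdd]
      rw [dif_pos]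
      · exact kite_inr_eq fun i => by simp
      · intro i; simp
    · rintro (g | β) hd
      · simp only [kiteAdd] at hd
        split_ifs at hd with hc
        · have h2 := Sum.inr.inj (Option.some.inj hd)
          refine congrArg Sum.inl (funext fun j => Subtype.ext ?_)
          have h3 := congrArg Subtype.val (congrFun h2 (r j))
          simp only [Equiv.symm_apply_apply] at h3
          exact (inv_eq_of_mul_eq_one_right h3).symm
      · simp [kiteAdd, Kite] at hd

private lemma kite_lcompl (l r : Equiv.Perm I) (a : Kite G I) :
    ∃! e', kiteAdd l r e' a = some (Sum.inr fun _ => (⟨1, le_refl 1⟩ : {g : G // g ≤ 1})) := by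
  rcases a with f | α
  · refine ⟨Sum.inr (fun i => ⟨((f (r.symm i) : G))⁻¹, inv_le_one'.mpr (f _).2⟩), ?_, ?_⟩
    · simp only [kiteAdd]
      rw [dif_pos]
      · exact kite_inr_eq fun i => by simp
      · intro i; simp
    · rintro (g | β) hd
      · simp [kiteAdd, Kite] at hd
      · simp only [kiteAdd] at hd
        split_ifs at hd with hc
        · have h2 := Sum.inr.inj (Option.some.inj hd)
          refine congrArg Sum.inr (funext fun i => Subtype.ext ?_)
          have h3 := congrArg Subtype.val (congrFun h2 i)
          exact eq_inv_of_mul_eq_one_left h3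
  · refine ⟨Sum.inl (fun j => ⟨((α (l j) : G))⁻¹, one_le_inv'.mpr (α _).2⟩), ?_, ?_⟩
    · simp only [kiteAdd]
      rw [dif_pos]
      · exact kite_inr_eq fun i => by simp
      · intro i; simp
    · rintro (g | β) hd
      · simp only [kiteAdd] at hd
        split_ifs at hd with hc
        · have h2 := Sum.inr.inj (Option.some.inj hd)
          refine congrArg Sum.inl (funext fun j => Subtype.ext ?_)
          have h3 := congrArg Subtype.val (congrFun h2 (l j))
          simp only [Equiv.symm_apply_apply] at h3
          exact eq_inv_of_mul_eq_one_left h3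
      · simp [kiteAdd, Kite] at hd

private lemma kite_exch (l r : Equiv.Perm I) (a b s : Kite G I)
    (h : kiteAdd l r a b = some s) :
    (∃ d, kiteAdd l r d a = some s) ∧ (∃ e', kiteAdd l r b e' = some s) := by
  rcases a with f | α <;> rcases b with g | β
  · -- inl f + inl g
    simp only [kiteAdd] at h
    obtain rfl := (Option.some.inj h).symm
    constructor
    · refine ⟨Sum.inl (fun j => ⟨(f j : G) * g j * ((f j : G))⁻¹, ?_⟩), ?_⟩
      · have := mul_le_mul_left (mul_le_mul_right (g j).2 ((f j : G))) ((f j : G))⁻¹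
        simpa using this
      · simp only [kiteAdd]
        exact kite_inl_eq fun j => by group
    · refine ⟨Sum.inl (fun j => ⟨((g j : G))⁻¹ * ((f j : G) * g j), ?_⟩), ?_⟩
      · have := mul_le_mul_right (le_mul_of_one_le_left' (f j).2 : (g j : G) ≤ _) ((g j : G))⁻¹
        simpa using this
      · simp only [kiteAdd]
        exact kite_inl_eq fun j => by group
  · -- inl f + inr β : rule III
    simp only [kiteAdd] at h
    split_ifs at h with hc
    · obtain rfl := (Option.some.inj h).symm
      constructor
      · refine ⟨Sum.inr (fun i => ⟨(f (l.symm i) : G) * β i * ((f (r.symm i) : G))⁻¹, ?_⟩), ?_⟩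
        · exact mul_le_one' ((kite_le_inv_iff _ _).mp (hc i)) (inv_le_one'.mpr (f _).2)
        · simp only [kiteAdd]
          rw [dif_pos]
          · exact kite_inr_eq fun i => by simp [mul_assoc]
          · intro i
            rw [kite_le_inv_iff']
            have := (kite_le_inv_iff _ _).mp (hc i)
            simpa [mul_assoc] using this
      · refine ⟨Sum.inl (fun j => ⟨((β (r j) : G))⁻¹ * f (l.symm (r j)) * β (r j), ?_⟩), ?_⟩
        · have := mul_le_mul_left
            (mul_le_mul_right (f (l.symm (r j))).2 ((β (r j) : G))⁻¹) ((β (r j) : G))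
          simpa using this
        · simp only [kiteAdd]
          rw [dif_pos]
          · refine kite_inr_eq fun i => ?_
            simp [mul_assoc]
          · intro i
            rw [kite_le_inv_iff']
            have := (kite_le_inv_iff _ _).mp (hc i)
            simpa [mul_assoc] using this
  · -- inr α + inl g : rule II
    simp only [kiteAdd] at h
    split_ifs at h with hc
    · obtain rfl := (Option.some.inj h).symm
      constructor
      · refine ⟨Sum.inl (fun j => ⟨(α (l j) : G) * g (r.symm (l j)) * ((α (l j) : G))⁻¹, ?_⟩), ?_⟩
        · have := mul_le_mul_left
            (mul_le_mul_right (g (r.symm (l j))).2 ((α (l j) : G))) ((α (l j) : G))⁻¹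
          simpa using this
        · simp only [kiteAdd]
          rw [dif_pos]
          · refine kite_inr_eq fun i => ?_
            simp [mul_assoc]
          · intro i
            rw [kite_le_inv_iff]
            have := (kite_le_inv_iff' _ _).mp (hc i)
            simpa [mul_assoc] using this
      · refine ⟨Sum.inr (fun i => ⟨((g (l.symm i) : G))⁻¹ * ((α i : G) * g (r.symm i)), ?_⟩), ?_⟩
        · exact mul_le_one' (inv_le_one'.mpr (g _).2) ((kite_le_inv_iff' _ _).mp (hc i))
        · simp only [kiteAdd]
          rw [dif_pos]
          · exact kite_inr_eq fun i => by simp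
          · intro i
            rw [kite_le_inv_iff]
            have := (kite_le_inv_iff' _ _).mp (hc i)
            simpa using this
  · -- inr + inr
    simp [kiteAdd] at h

private lemma kite_one_add (l r : Equiv.Perm I) (a : Kite G I)
    (h : (kiteAdd l r (Sum.inr fun _ => (⟨1, le_refl 1⟩ : {g : G // g ≤ 1})) a).isSome) :
    a = Sum.inl (fun _ => (⟨1, le_refl 1⟩ : {g : G // 1 ≤ g})) := by
  rcases a with f | β
  · simp only [kiteAdd] at h
    split_ifs at h with hc
    · refine congrArg Sum.inl (funext fun j => Subtype.ext (le_antisymm ?_ (f j).2))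
      have := hc (r j)
      simpa using this
    · simp at h
  · simp [kiteAdd] at h

private lemma kite_add_one (l r : Equiv.Perm I) (a : Kite G I)
    (h : (kiteAdd l r a (Sum.inr fun _ => (⟨1, le_refl 1⟩ : {g : G // g ≤ 1}))).isSome) :
    a = Sum.inl (fun _ => (⟨1, le_refl 1⟩ : {g : G // 1 ≤ g})) := by
  rcases a with f | β
  · simp only [kiteAdd] at h
    split_ifs at h with hc
    · refine congrArg Sum.inl (funext fun j => Subtype.ext (le_antisymm ?_ (f j).2))
      have := hc (l j)
      simpa using this
    · simp at h
  · simp [kiteAdd] at h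

end KiteProof2

/-- **Kite pseudo effect algebra.** For a po-group `G`, a set `I`, and bijections
`λ ρ : I → I`, the kite `(G⁺)^I ⊎ (G⁻)^I` with `0 = ⟨e⟩`, `1 = ⟨e⁻¹⟩` and the partial
addition given by rules (I)–(IV) is a pseudo effect algebra. -/
theorem stmt3 {G : Type*} [Group G] [PartialOrder G]
    [CovariantClass G G (· * ·) (· ≤ ·)]
    [CovariantClass G G (Function.swap (· * ·)) (· ≤ ·)]
    {I : Type*} (l r : Equiv.Perm I) :
    ∃ P : PseudoEffectAlgebra (Kite G I),
      P.add = kiteAdd l r ∧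
      P.zero = Sum.inl (fun _ => ⟨1, le_refl 1⟩) ∧
      P.one = Sum.inr (fun _ => ⟨1, le_refl 1⟩) := by
  exact ⟨⟨kiteAdd l r, Sum.inl (fun _ => ⟨1, le_refl 1⟩), Sum.inr (fun _ => ⟨1, le_refl 1⟩),
    kite_assoc l r, kite_rcompl l r, kite_lcompl l r, kite_exch l r,
    kite_one_add l r, kite_add_one l r⟩, rfl, rfl, rfl⟩
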